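/- In the setting above with A s-Lefschetz for s ≤ n−2, for each p = 2(n−1)−i with i ≤ s, the map j induces an isomorphism of vector spaces A^p / ker(ω·(−) : A^p → A^{p+2}) ≅ B^p; moreover ω·(−) : A^p → A^{p+2} is surjective, so dim B^p = dim A^{p+2} = dim A^i. -/
import Mathlib

open Module

section Aux

variable {V W U X : Type*} [AddCommGroup V] [Module ℝ V] [AddCommGroup W] [Module ℝ W]
  [AddCommGroup U] [Module ℝ U] [AddCommGroup X] [Module ℝ X]
  [FiniteDimensional ℝ V] [FiniteDimensional ℝ W] [FiniteDimensional ℝ U]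
  [FiniteDimensional ℝ X]

omit [FiniteDimensional ℝ V] [FiniteDimensional ℝ W] in
lemma aux_inj (B : V →ₗ[ℝ] W →ₗ[ℝ] ℝ) (hB : ∀ v, (∀ w, B v w = 0) → v = 0) :
    Function.Injective B := by
  rw [← LinearMap.ker_eq_bot, LinearMap.ker_eq_bot']
  intro v hv
  exact hB v (fun w => by rw [hv]; rfl)

lemma aux_le (B : V →ₗ[ℝ] W →ₗ[ℝ] ℝ) (hB : ∀ v, (∀ w, B v w = 0) → v = 0) :
    finrank ℝ V ≤ finrank ℝ W := by
  have := LinearMap.finrank_le_finrank_of_injective (aux_inj B hB)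
  rwa [Subspace.dual_finrank_eq] at this

lemma aux_dual_surj (B : V →ₗ[ℝ] W →ₗ[ℝ] ℝ) (hB : ∀ v, (∀ w, B v w = 0) → v = 0)
    (hle : finrank ℝ W ≤ finrank ℝ V) : Function.Surjective B := by
  rw [← LinearMap.range_eq_top]
  apply Submodule.eq_top_of_finrank_eq
  rw [LinearMap.finrank_range_of_inj (aux_inj B hB), Subspace.dual_finrank_eq]
  exact le_antisymm (aux_le B hB) hle

lemma aux_rnd (B : V →ₗ[ℝ] W →ₗ[ℝ] ℝ) (hB : ∀ v, (∀ w, B v w = 0) → v = 0)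
    (hle : finrank ℝ W ≤ finrank ℝ V) : ∀ w, (∀ v, B v w = 0) → w = 0 := by
  intro w hw
  rw [← Module.forall_dual_apply_eq_zero_iff ℝ w]
  intro φ
  obtain ⟨v, rfl⟩ := aux_dual_surj B hB hle φ
  exact hw v

omit [FiniteDimensional ℝ U] in
lemma aux_surj (f : U →ₗ[ℝ] W) (Q : X →ₗ[ℝ] W →ₗ[ℝ] ℝ)
    (hQ : ∀ x, (∀ w, Q x w = 0) → x = 0)
    (hle : finrank ℝ W ≤ finrank ℝ X)
    (h : ∀ x, (∀ u, Q x (f u) = 0) → x = 0) : Function.Surjective f := by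
  rw [← LinearMap.dualMap_injective_iff]
  rw [← LinearMap.ker_eq_bot, LinearMap.ker_eq_bot']
  intro φ hφ
  obtain ⟨x, rfl⟩ := aux_dual_surj Q hQ hle φ
  rw [h x (fun u => by have := congrFun (congrArg DFunLike.coe hφ) u; simpa using this),
    map_zero]

end Aux

noncomputable def pairR {A : Type*} [Ring A] [Algebra ℝ A] (ι : A →ₗ[ℝ] ℝ)
    (P Q : Submodule ℝ A) : ↥P →ₗ[ℝ] ↥Q →ₗ[ℝ] ℝ :=
  ((LinearMap.mul ℝ A).compl₁₂ P.subtype Q.subtype).compr₂ ι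

@[simp] lemma pairR_apply {A : Type*} [Ring A] [Algebra ℝ A] (ι : A →ₗ[ℝ] ℝ)
    (P Q : Submodule ℝ A) (a : P) (b : Q) :
    pairR ι P Q a b = ι ((a : A) * (b : A)) := rfl

/-- In the same setting, with `A` `s`-Lefschetz for `s ≤ n-2`,
for each `p = 2(n-1) - i` with `i ≤ s`, the map `j` induces an isomorphism
`A^p / ker(ω·(-)) ≅ B^p`: the kernel of `j` on `A^p` is exactly
`ker(ω·(-))`, `j : A^p → B^p` is surjective, multiplication by `ω` maps `A^p`
onto `A^{p+2}`, and `dim B^p = dim A^{p+2} = dim A^i`. -/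
theorem stmt7 {A B : Type*} [Ring A] [Algebra ℝ A] [Ring B] [Algebra ℝ B]
    [FiniteDimensional ℝ A] [FiniteDimensional ℝ B]
    (𝒜 : ℕ → Submodule ℝ A) (ℬ : ℕ → Submodule ℝ B)
    [GradedRing 𝒜] [GradedRing ℬ]
    (n : ℕ) (hn : 2 ≤ n) (ω : A) (hω : ω ∈ 𝒜 2) (k : ℝ) (hk : k ≠ 0)
    (intA : A →ₗ[ℝ] ℝ) (intB : B →ₗ[ℝ] ℝ)
    (htopA : ∀ m, 2 * n < m → 𝒜 m = ⊥)
    (htopB : ∀ m, 2 * n - 2 < m → ℬ m = ⊥)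
    (hndA : ∀ p q, p + q = 2 * n → ∀ a ∈ 𝒜 p,
      (∀ b ∈ 𝒜 q, intA (a * b) = 0) → a = 0)
    (hndB : ∀ p q, p + q = 2 * n - 2 → ∀ a ∈ ℬ p,
      (∀ b ∈ ℬ q, intB (a * b) = 0) → a = 0)
    (j : A →ₐ[ℝ] B)
    (hjgr : ∀ i, ∀ x ∈ 𝒜 i, j x ∈ ℬ i)
    (hjinj : ∀ i, i ≤ n - 2 → ∀ x ∈ 𝒜 i, j x = 0 → x = 0)
    (hjsurj : ∀ i, i ≤ n - 2 → ∀ y ∈ ℬ i, ∃ x ∈ 𝒜 i, j x = y)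
    (hint : ∀ x ∈ 𝒜 (2 * n - 2), intB (j x) = k * intA (x * ω))
    (s : ℕ) (hs : s ≤ n - 2)
    (hLA : ∀ i, i ≤ s →
      (∀ a ∈ 𝒜 i, ω ^ (n - i) * a = 0 → a = 0) ∧
      (∀ b ∈ 𝒜 (2 * n - i), ∃ a ∈ 𝒜 i, ω ^ (n - i) * a = b)) :
    ∀ i, i ≤ s →
      (∀ z ∈ 𝒜 (2 * (n - 1) - i), (j z = 0 ↔ z * ω = 0)) ∧
      (∀ y ∈ ℬ (2 * (n - 1) - i), ∃ z ∈ 𝒜 (2 * (n - 1) - i), j z = y) ∧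
      (∀ w ∈ 𝒜 (2 * (n - 1) - i + 2), ∃ z ∈ 𝒜 (2 * (n - 1) - i), z * ω = w) ∧
      Module.finrank ℝ (ℬ (2 * (n - 1) - i)) =
        Module.finrank ℝ (𝒜 (2 * (n - 1) - i + 2)) ∧
      Module.finrank ℝ (𝒜 (2 * (n - 1) - i + 2)) = Module.finrank ℝ (𝒜 i) := by
  classical
  intro i hi
  have hi2 : i ≤ n - 2 := hi.trans hs
  set p := 2 * (n - 1) - i with hp
  have e1 : p + i = 2 * n - 2 := by omega
  have e2 : i + p = 2 * n - 2 := by omega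
  have e3 : p + (i + 2) = 2 * n := by omega
  have e5 : (p + 2) + i = 2 * n := by omega
  have e6 : i + (p + 2) = 2 * n := by omega
  -- nondegeneracy of the pairings, in subtype form
  have ndA : ∀ a b : ℕ, a + b = 2 * n →
      ∀ v : 𝒜 a, (∀ w : 𝒜 b, pairR intA (𝒜 a) (𝒜 b) v w = 0) → v = 0 := by
    intro a b hab v hv
    exact Subtype.ext (hndA a b hab v v.2 (fun x hx => hv ⟨x, hx⟩))
  have ndB : ∀ a b : ℕ, a + b = 2 * n - 2 →
      ∀ v : ℬ a, (∀ w : ℬ b, pairR intB (ℬ a) (ℬ b) v w = 0) → v = 0 := by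
    intro a b hab v hv
    exact Subtype.ext (hndB a b hab v v.2 (fun x hx => hv ⟨x, hx⟩))
  have dimA : ∀ a b : ℕ, a + b = 2 * n →
      finrank ℝ (𝒜 a) ≤ finrank ℝ (𝒜 b) :=
    fun a b hab => aux_le _ (ndA a b hab)
  have dimB : ∀ a b : ℕ, a + b = 2 * n - 2 →
      finrank ℝ (ℬ a) ≤ finrank ℝ (ℬ b) :=
    fun a b hab => aux_le _ (ndB a b hab)
  have rndA : ∀ a b : ℕ, a + b = 2 * n →
      ∀ w : 𝒜 b, (∀ v : 𝒜 a, pairR intA (𝒜 a) (𝒜 b) v w = 0) → w = 0 :=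
    fun a b hab => aux_rnd _ (ndA a b hab) (dimA b a (by omega))
  have rndB : ∀ a b : ℕ, a + b = 2 * n - 2 →
      ∀ w : ℬ b, (∀ v : ℬ a, pairR intB (ℬ a) (ℬ b) v w = 0) → w = 0 :=
    fun a b hab => aux_rnd _ (ndB a b hab) (dimB b a (by omega))
  -- injectivity of left multiplication by ω on 𝒜 i
  have Lω : ∀ x ∈ 𝒜 i, ω * x = 0 → x = 0 := by
    intro x hx h0
    refine (hLA i hi).1 x hx ?_
    rw [show n - i = (n - i - 1) + 1 by omega, pow_succ, mul_assoc, h0, mul_zero]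
  -- right multiplication by ω as a map 𝒜 p → 𝒜 (p+2)
  have hRmem : ∀ x ∈ 𝒜 p, x * ω ∈ 𝒜 (p + 2) := fun x hx => SetLike.mul_mem_graded hx hω
  set Rω : ↥(𝒜 p) →ₗ[ℝ] ↥(𝒜 (p + 2)) := (LinearMap.mulRight ℝ ω).restrict hRmem with hRωdef
  -- Goal 3: surjectivity of Rω
  have hG3 : Function.Surjective Rω := by
    apply aux_surj Rω (pairR intA (𝒜 (p + 2)) (𝒜 i)).flip
    · intro x hx
      exact rndA (p + 2) i e5 x (fun v => hx v)
    · exact dimA (p + 2) i e5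
    · intro x hx
      have hmem : ω * (x : A) ∈ 𝒜 (i + 2) := by
        rw [show i + 2 = 2 + i by omega]
        exact SetLike.mul_mem_graded hω x.2
      have h1 : (⟨ω * (x : A), hmem⟩ : 𝒜 (i + 2)) = 0 := by
        apply rndA p (i + 2) e3
        intro v
        show intA ((v : A) * (ω * (x : A))) = 0
        rw [← mul_assoc]
        exact hx v
      have h2 : ω * (x : A) = 0 := congrArg Subtype.val h1
      exact Subtype.ext (Lω x x.2 h2)
  have G3 : ∀ w ∈ 𝒜 (p + 2), ∃ z ∈ 𝒜 p, z * ω = w := by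
    intro w hw
    obtain ⟨z, hz⟩ := hG3 ⟨w, hw⟩
    exact ⟨z, z.2, congrArg Subtype.val hz⟩
  -- key integration identity
  have key : ∀ a ∈ 𝒜 i, ∀ z ∈ 𝒜 p, intB (j a * j z) = k * intA (a * (z * ω)) := by
    intro a ha z hz
    calc intB (j a * j z) = intB (j (a * z)) := by rw [← map_mul j a z]
      _ = k * intA ((a * z) * ω) :=
        hint (a * z) (by rw [← e2]; exact SetLike.mul_mem_graded ha hz)
      _ = k * intA (a * (z * ω)) := by rw [mul_assoc]
  -- Goal 2: surjectivity of j : 𝒜 p → ℬ p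
  set Jp : ↥(𝒜 p) →ₗ[ℝ] ↥(ℬ p) :=
    j.toLinearMap.restrict (fun x hx => hjgr p x hx) with hJpdef
  have hG2 : Function.Surjective Jp := by
    apply aux_surj Jp (pairR intB (ℬ i) (ℬ p))
    · intro x hx
      exact ndB i p e2 x hx
    · exact dimB p i e1
    · intro x hx
      obtain ⟨a, ha, hax⟩ := hjsurj i hi2 x x.2
      have ha0 : a = 0 := by
        apply hndA i (p + 2) e6 a ha
        intro b hb
        obtain ⟨z, hz, rfl⟩ := G3 b hb
        have h2 : k * intA (a * (z * ω)) = 0 := by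
          rw [← key a ha z hz, hax]
          exact hx ⟨z, hz⟩
        exact (mul_eq_zero.mp h2).resolve_left hk
      exact Subtype.ext (by rw [← hax, ha0, map_zero]; simp)
  have G2 : ∀ y ∈ ℬ p, ∃ z ∈ 𝒜 p, j z = y := by
    intro y hy
    obtain ⟨z, hz⟩ := hG2 ⟨y, hy⟩
    exact ⟨z, z.2, congrArg Subtype.val hz⟩
  -- Goal 1
  have G1 : ∀ z ∈ 𝒜 p, (j z = 0 ↔ z * ω = 0) := by
    intro z hz
    constructor
    · intro h0
      have hall : ∀ a : 𝒜 i,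
          pairR intA (𝒜 i) (𝒜 (p + 2)) a ⟨z * ω, hRmem z hz⟩ = 0 := by
        intro a
        show intA ((a : A) * (z * ω)) = 0
        have h2 : k * intA ((a : A) * (z * ω)) = 0 := by
          rw [← key a a.2 z hz, h0, mul_zero, map_zero]
        exact (mul_eq_zero.mp h2).resolve_left hk
      have := rndA i (p + 2) e6 ⟨z * ω, hRmem z hz⟩ hall
      exact congrArg Subtype.val this
    · intro h0
      have hjz : j z ∈ ℬ p := hjgr p z hz
      have hall : ∀ b : ℬ i, pairR intB (ℬ i) (ℬ p) b ⟨j z, hjz⟩ = 0 := by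
        intro b
        obtain ⟨a, ha, hab⟩ := hjsurj i hi2 b b.2
        show intB ((b : B) * j z) = 0
        rw [← hab, key a ha z hz, h0, mul_zero, map_zero, mul_zero]
      have := rndB i p e2 ⟨j z, hjz⟩ hall
      exact congrArg Subtype.val this
  -- Goal 5
  have G5 : finrank ℝ (𝒜 (p + 2)) = finrank ℝ (𝒜 i) :=
    le_antisymm (dimA (p + 2) i e5) (dimA i (p + 2) e6)
  -- Goal 4
  set Ji : ↥(𝒜 i) →ₗ[ℝ] ↥(ℬ i) :=
    j.toLinearMap.restrict (fun x hx => hjgr i x hx) with hJidef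
  have hJi : Function.Bijective Ji := by
    constructor
    · rw [← LinearMap.ker_eq_bot, LinearMap.ker_eq_bot']
      intro x hx
      exact Subtype.ext (hjinj i hi2 x x.2 (congrArg Subtype.val hx))
    · intro y
      obtain ⟨a, ha, hay⟩ := hjsurj i hi2 y y.2
      exact ⟨⟨a, ha⟩, Subtype.ext hay⟩
  have hAB : finrank ℝ (𝒜 i) = finrank ℝ (ℬ i) :=
    (LinearEquiv.ofBijective Ji hJi).finrank_eq
  have G4 : finrank ℝ (ℬ p) = finrank ℝ (𝒜 (p + 2)) := by
    rw [le_antisymm (dimB p i e1) (dimB i p e2), ← hAB, G5]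
  exact ⟨G1, G2, G3, G4, G5⟩
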